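/- Let μ > 0 and L ∈ ℕ with (μ/2)(L-3) > 2. Define σ := (μ/2)(L-3). If F : ℕ → ℝ≥0 satisfies μ F_{L'}(ℓ) ≤ f(ℓ+L'+2)+f(ℓ+L'+1)+f(ℓ-L'-1)+f(ℓ-L'-2) where F_{L'}(ℓ) = ∑_{k=ℓ-L'}^{ℓ+L'} f(k) for all L ≤ L' ≤ 2L-2, then ∑_{k=ℓ+L+1}^{ℓ+2L} f(k) + ∑_{k=ℓ-2L}^{ℓ-L-1} f(k) ≥ (μ/2) ∑_{j=0}^{L-2} F_{L+j}(ℓ)/2 ≥ σ F_L(ℓ) (pairing consecutive j's). -/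

import Mathlib

open Finset

lemma sum_comp_le (f : ℕ → ℝ) (hf : ∀ k, 0 ≤ f k) (g : ℕ → ℕ) (s t : Finset ℕ)
    (hinj : ∀ x ∈ s, ∀ y ∈ s, g x = g y → x = y) (hmap : ∀ j ∈ s, g j ∈ t) :
    ∑ j ∈ s, f (g j) ≤ ∑ k ∈ t, f k := by
  rw [← Finset.sum_image hinj]
  exact Finset.sum_le_sum_of_subset_of_nonneg
    (fun k hk => by obtain ⟨j, hj, rfl⟩ := Finset.mem_image.mp hk; exact hmap j hj)
    (fun k _ _ => hf k)

/-- Combinatorial counting step. With `σ = (μ/2)(L-3) > 2` and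
`F_{L'}(ℓ) = ∑_{k=ℓ-L'}^{ℓ+L'} f k`, if `μ F_{L'}(ℓ)` is bounded by the four
boundary terms for all `L ≤ L' ≤ 2L-2`, then (each boundary term appearing at
most twice) `∑_{k=ℓ+L+1}^{ℓ+2L} f k + ∑_{k=ℓ-2L}^{ℓ-L-1} f k
≥ (μ/2) ∑_{j=0}^{L-2} F_{L+j}(ℓ) ≥ σ F_L(ℓ)`. -/
theorem stmt18 (μ : ℝ) (L ℓ : ℕ) (f : ℕ → ℝ)
    (hμ : 0 < μ) (hσ : 2 < μ / 2 * ((L : ℝ) - 3)) (hℓ : 2 * L ≤ ℓ)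
    (hf : ∀ k, 0 ≤ f k)
    (hyp : ∀ L', L ≤ L' → L' ≤ 2 * L - 2 →
      μ * (∑ k ∈ Finset.Icc (ℓ - L') (ℓ + L'), f k)
        ≤ f (ℓ + L' + 2) + f (ℓ + L' + 1) + f (ℓ - L' - 1) + f (ℓ - L' - 2)) :
    μ / 2 * (∑ j ∈ Finset.range (L - 1), ∑ k ∈ Finset.Icc (ℓ - (L + j)) (ℓ + (L + j)), f k)
        ≤ (∑ k ∈ Finset.Icc (ℓ + L + 1) (ℓ + 2 * L), f k)
          + (∑ k ∈ Finset.Icc (ℓ - 2 * L) (ℓ - L - 1), f k) ∧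
    μ / 2 * ((L : ℝ) - 3) * (∑ k ∈ Finset.Icc (ℓ - L) (ℓ + L), f k)
      ≤ μ / 2 * (∑ j ∈ Finset.range (L - 1), ∑ k ∈ Finset.Icc (ℓ - (L + j)) (ℓ + (L + j)), f k) := by
  have hL : 4 ≤ L := by
    by_contra h
    push_neg at h
    have hL3 : (L : ℝ) ≤ 3 := by exact_mod_cast Nat.lt_succ_iff.mp h
    nlinarith
  have hFLpos : 0 ≤ ∑ k ∈ Finset.Icc (ℓ - L) (ℓ + L), f k :=
    Finset.sum_nonneg fun k _ => hf k
  set Sp := ∑ k ∈ Finset.Icc (ℓ + L + 1) (ℓ + 2 * L), f k with hSp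
  set Sm := ∑ k ∈ Finset.Icc (ℓ - 2 * L) (ℓ - L - 1), f k with hSm
  constructor
  · -- part 1
    have hmem : ∀ j ∈ Finset.range (L - 1), j < L - 1 := fun j hj => Finset.mem_range.mp hj
    have step : ∀ j ∈ Finset.range (L - 1),
        μ * (∑ k ∈ Finset.Icc (ℓ - (L + j)) (ℓ + (L + j)), f k)
          ≤ f (ℓ + (L + j) + 2) + f (ℓ + (L + j) + 1) + f (ℓ - (L + j) - 1)
            + f (ℓ - (L + j) - 2) := by
      intro j hj
      have := hmem j hj
      exact hyp (L + j) (by omega) (by omega)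
    have h1 : μ * (∑ j ∈ Finset.range (L - 1),
        ∑ k ∈ Finset.Icc (ℓ - (L + j)) (ℓ + (L + j)), f k)
        ≤ ∑ j ∈ Finset.range (L - 1),
          (f (ℓ + (L + j) + 2) + f (ℓ + (L + j) + 1) + f (ℓ - (L + j) - 1)
            + f (ℓ - (L + j) - 2)) := by
      rw [Finset.mul_sum]
      exact Finset.sum_le_sum step
    have e1 : ∑ j ∈ Finset.range (L - 1), f (ℓ + (L + j) + 2) ≤ Sp :=
      sum_comp_le f hf (fun j => ℓ + (L + j) + 2) _ _
        (fun x hx y hy h => by omega)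
        (fun j hj => by
          have := Finset.mem_range.mp hj
          simp only [Finset.mem_Icc]; omega)
    have e2 : ∑ j ∈ Finset.range (L - 1), f (ℓ + (L + j) + 1) ≤ Sp :=
      sum_comp_le f hf (fun j => ℓ + (L + j) + 1) _ _
        (fun x hx y hy h => by omega)
        (fun j hj => by
          have := Finset.mem_range.mp hj
          simp only [Finset.mem_Icc]; omega)
    have e3 : ∑ j ∈ Finset.range (L - 1), f (ℓ - (L + j) - 1) ≤ Sm :=
      sum_comp_le f hf (fun j => ℓ - (L + j) - 1) _ _
        (fun x hx y hy h => by
          have hx' := Finset.mem_range.mp hx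
          have hy' := Finset.mem_range.mp hy
          omega)
        (fun j hj => by
          have := Finset.mem_range.mp hj
          simp only [Finset.mem_Icc]; omega)
    have e4 : ∑ j ∈ Finset.range (L - 1), f (ℓ - (L + j) - 2) ≤ Sm :=
      sum_comp_le f hf (fun j => ℓ - (L + j) - 2) _ _
        (fun x hx y hy h => by
          have hx' := Finset.mem_range.mp hx
          have hy' := Finset.mem_range.mp hy
          omega)
        (fun j hj => by
          have := Finset.mem_range.mp hj
          simp only [Finset.mem_Icc]; omega)
    have h2 : ∑ j ∈ Finset.range (L - 1),
          (f (ℓ + (L + j) + 2) + f (ℓ + (L + j) + 1) + f (ℓ - (L + j) - 1)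
            + f (ℓ - (L + j) - 2)) ≤ 2 * (Sp + Sm) := by
      simp only [Finset.sum_add_distrib]
      linarith
    linarith
  · -- part 2
    have hsub : ∀ j ∈ Finset.range (L - 1),
        ∑ k ∈ Finset.Icc (ℓ - L) (ℓ + L), f k
          ≤ ∑ k ∈ Finset.Icc (ℓ - (L + j)) (ℓ + (L + j)), f k := by
      intro j _
      apply Finset.sum_le_sum_of_subset_of_nonneg
      · apply Finset.Icc_subset_Icc <;> omega
      · exact fun k _ _ => hf k
    have hcard : (L - 1 : ℕ) • (∑ k ∈ Finset.Icc (ℓ - L) (ℓ + L), f k)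
        ≤ ∑ j ∈ Finset.range (L - 1),
          ∑ k ∈ Finset.Icc (ℓ - (L + j)) (ℓ + (L + j)), f k := by
      have := Finset.card_nsmul_le_sum (Finset.range (L - 1))
        (fun j => ∑ k ∈ Finset.Icc (ℓ - (L + j)) (ℓ + (L + j)), f k)
        (∑ k ∈ Finset.Icc (ℓ - L) (ℓ + L), f k) hsub
      simpa using this
    have hcast : ((L - 1 : ℕ) : ℝ) = (L : ℝ) - 1 := by
      have : (1:ℕ) ≤ L := by omega
      push_cast [this]; ring
    rw [nsmul_eq_mul, hcast] at hcard
    nlinarith [hcard, hFLpos, hμ]
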